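/- Let A be an additive category with binary biproducts, let T be a triangulated category, and let F : T → K(A) be an exact (i.e. triangulated, commuting with shifts) fully faithful functor into the homotopy category of cochain complexes over A. Suppose S → S → S' → S[1] is a distinguished triangle in T whose first morphism is 2·id_S. Then 2·id_{S'} = 0 in T. -/

import Mathlib

open CategoryTheory CategoryTheory.Limits CategoryTheory.Pretriangulated

universe v v' u u'

namespace Paper7

open CochainComplex CochainComplex.HomComplex CochainComplex.mappingCone in
/-- `2 • 𝟙` on the mapping cone of `2 • 𝟙 X` is null-homotopic. -/
noncomputable def twoSmulIdHomotopy {A : Type u} [Category.{v} A] [Preadditive A]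
    [HasBinaryBiproducts A] (X : CochainComplex A ℤ) :
    Homotopy ((2 : ℤ) • 𝟙 (mappingCone ((2 : ℤ) • 𝟙 X))) 0 := by
  set φ : X ⟶ X := (2 : ℤ) • 𝟙 X with hφ
  refine (Cochain.equivHomotopy _ _).symm ⟨(snd φ).comp (inl φ) (zero_add (-1)), ?_⟩
  rw [δ_zero_cochain_comp _ _ _ (neg_add_cancel 1), δ_inl, δ_snd]
  ext p
  rw [hφ]
  simp [Cochain.comp_v _ _ (add_neg_cancel 1) p (p+1) p rfl (by omega)]
  rw [← smul_add, add_comm, id_X ((2 : ℤ) • 𝟙 X) p (p+1) rfl]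

theorem statement7 {A : Type u} [Category.{v} A] [Preadditive A] [HasZeroObject A]
    [HasBinaryBiproducts A]
    {T : Type u'} [Category.{v'} T] [HasZeroObject T] [HasShift T ℤ] [Preadditive T]
    [∀ n : ℤ, (shiftFunctor T n).Additive] [Pretriangulated T]
    (F : T ⥤ HomotopyCategory A (ComplexShape.up ℤ))
    [F.CommShift ℤ] [F.IsTriangulated] [F.Full] [F.Faithful]
    (S S' : T) (g : S ⟶ S') (h : S' ⟶ (S⟦(1 : ℤ)⟧))
    (hT : Triangle.mk ((2 : ℤ) • 𝟙 S) g h ∈ distTriang T) :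
    (2 : ℤ) • 𝟙 S' = 0 := by
  have hT₁ := F.map_distinguished _ hT
  set X : CochainComplex A ℤ := (F.obj S).as with hX
  set φ : X ⟶ X := (2 : ℤ) • 𝟙 X with hφ
  have hT₂ := HomotopyCategory.mappingCone_triangleh_distinguished φ
  have hobj : (HomotopyCategory.quotient A (ComplexShape.up ℤ)).obj X = F.obj S := rfl
  have hmor : (F.mapTriangle.obj (Triangle.mk ((2 : ℤ) • 𝟙 S) g h)).mor₁ ≫
      (Iso.refl (F.obj S)).hom = (eqToIso hobj).hom ≫
      (CochainComplex.mappingCone.triangleh φ).mor₁ := by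
    change F.map ((2 : ℤ) • 𝟙 S) ≫ 𝟙 (F.obj S) =
      𝟙 (F.obj S) ≫ (HomotopyCategory.quotient A (ComplexShape.up ℤ)).map φ
    rw [hφ]
    simp only [CategoryTheory.Functor.map_zsmul, CategoryTheory.Functor.map_id]
    simp
    change (2 : ℤ) • 𝟙 (F.obj S) = 𝟙 (F.obj S) ≫ ((2 : ℤ) • 𝟙 (F.obj S))
    exact (Category.id_comp _).symm
  have e := isoTriangleOfIso₁₂ _ _ hT₁ hT₂ (eqToIso hobj).symm.symm (Iso.refl _) hmor
  have e3 : F.obj S' ≅ (CochainComplex.mappingCone.triangleh φ).obj₃ :=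
    Triangle.π₃.mapIso e
  have hzero : (2 : ℤ) • 𝟙 ((CochainComplex.mappingCone.triangleh φ).obj₃) = 0 := by
    have h2 := HomotopyCategory.eq_of_homotopy _ _ (twoSmulIdHomotopy X)
    change (2 : ℤ) • 𝟙 ((HomotopyCategory.quotient A (ComplexShape.up ℤ)).obj
        (CochainComplex.mappingCone φ)) = 0
    rw [show (𝟙 ((HomotopyCategory.quotient A (ComplexShape.up ℤ)).obj
        (CochainComplex.mappingCone φ))) = (HomotopyCategory.quotient A
        (ComplexShape.up ℤ)).map (𝟙 _) by simp,
      ← CategoryTheory.Functor.map_zsmul]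
    exact h2.trans ((HomotopyCategory.quotient A (ComplexShape.up ℤ)).map_zero _ _)
  apply F.map_injective
  simp only [CategoryTheory.Functor.map_zsmul, CategoryTheory.Functor.map_id,
    CategoryTheory.Functor.map_zero]
  calc (2 : ℤ) • 𝟙 (F.obj S') = e3.hom ≫ ((2 : ℤ) • 𝟙 _) ≫ e3.inv := by simp
    _ = 0 := by rw [hzero]; simp

end Paper7
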